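/- Let p be a prime and let G and H be finite abelian p-groups of exponent dividing p^e. Then δ_G(n) = −α_p(G) + Σ_{k=1}^{e} r̃_k(G)·{(n−1)/p^k} for all integers n, and δ_{G×H}(n) = δ_G(n) + δ_H(n). -/

import Mathlib

open scoped Classical

/-- The ring `F_q[t]/(t^n)` where `q = p^f`. -/
abbrev Rq (p f n : ℕ) [Fact p.Prime] : Type :=
  Polynomial (GaloisField p f) ⧸
    Ideal.span {(Polynomial.X : Polynomial (GaloisField p f)) ^ n}

/-- The class of `t` in `F_q[t]/(t^n)`. -/
noncomputable def tbar (p f n : ℕ) [Fact p.Prime] : Rq p f n :=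
  Ideal.Quotient.mk _ (Polynomial.X : Polynomial (GaloisField p f))

/-- The group of principal units `U_n = (1+𝔭)/(1+𝔭^n)`, realised as the subgroup of
units of `F_q[t]/(t^n)` that are congruent to `1` modulo `t`. -/
noncomputable def Un (p f n : ℕ) [Fact p.Prime] : Subgroup (Rq p f n)ˣ where
  carrier := {u | (u : Rq p f n) - 1 ∈ Ideal.span {tbar p f n}}
  one_mem' := by simp
  mul_mem' := by
    intro a b ha hb
    simp only [Set.mem_setOf_eq] at ha hb ⊢
    have h : ((a * b : (Rq p f n)ˣ) : Rq p f n) - 1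
        = (a : Rq p f n) * ((b : Rq p f n) - 1) + ((a : Rq p f n) - 1) := by
      push_cast; ring
    rw [h]
    exact Ideal.add_mem _ (Ideal.mul_mem_left _ _ hb) ha
  inv_mem' := by
    intro a ha
    have h1 : ((a⁻¹ : (Rq p f n)ˣ) : Rq p f n) * (a : Rq p f n) = 1 := by
      rw [← Units.val_mul, inv_mul_cancel a, Units.val_one]
    have key : ((a⁻¹ : (Rq p f n)ˣ) : Rq p f n) - 1
        = -(((a⁻¹ : (Rq p f n)ˣ) : Rq p f n) * ((a : Rq p f n) - 1)) := by
      linear_combination h1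
    rw [Set.mem_setOf_eq, key]
    exact neg_mem (Ideal.mul_mem_left _ _ ha)

/-- The `ℓ^k`-rank of a finite abelian group `A`, i.e. the `F_ℓ`-dimension of
`A^{ℓ^{k-1}}/A^{ℓ^k}` (encoded as `log_ℓ` of the cardinality of that elementary
abelian quotient). -/
noncomputable def pkRank (A : Type*) [CommGroup A] (ℓ k : ℕ) : ℕ :=
  Nat.log ℓ (Nat.card
    ((powMonoidHom (ℓ ^ (k - 1)) : A →* A).range ⧸
      ((powMonoidHom (ℓ ^ k) : A →* A).range.subgroupOf
        (powMonoidHom (ℓ ^ (k - 1)) : A →* A).range)))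

/-- `α_G(A)`: the number of subgroups of `A` isomorphic to `G`. -/
noncomputable def numIsoSubgroups (G A : Type*) [Group G] [Group A] : ℕ :=
  Nat.card {H : Subgroup A // Nonempty (H ≃* G)}

/-- `|Inj(G,A)|`: the number of injective group homomorphisms `G → A`. -/
noncomputable def numInj (G A : Type*) [Group G] [Group A] : ℕ :=
  Nat.card {φ : G →* A // Function.Injective φ}

/-- The `ℓ`-Sylow subgroup (`ℓ`-primary component) of an abelian group. -/
noncomputable def primaryPart (G : Type*) [CommGroup G] (ℓ : ℕ) (hℓ : ℓ.Prime) : Subgroup G :=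
  haveI : Fact ℓ.Prime := ⟨hℓ⟩
  CommGroup.primaryComponent G ℓ

/-- The subgroup of elements of order coprime to `p`. -/
def coprimePart (G : Type*) [CommGroup G] (p : ℕ) : Subgroup G where
  carrier := {g | Nat.Coprime (orderOf g) p}
  one_mem' := by simp [Nat.Coprime]
  mul_mem' := by
    intro a b ha hb
    exact Nat.Coprime.coprime_dvd_left ((Commute.all a b).orderOf_mul_dvd_mul_orderOf)
      (Nat.Coprime.mul ha hb)
  inv_mem' := by
    intro a ha
    simpa [orderOf_inv] using ha

/-- `δ(n,k) = {n/p^k} - {n/p^{k-1}}`. -/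
noncomputable def deltaNK (p : ℕ) (n : ℤ) (k : ℕ) : ℝ :=
  Int.fract ((n : ℝ) / (p : ℝ) ^ k) - Int.fract ((n : ℝ) / (p : ℝ) ^ (k - 1))

/-- `α_p(G) = Σ_{k=1}^e (p-1)/p^k · r_k(G)`. -/
noncomputable def alphaP (p e : ℕ) (G : Type*) [CommGroup G] : ℝ :=
  ∑ k ∈ Finset.Icc 1 e, ((p : ℝ) - 1) / (p : ℝ) ^ k * (pkRank G p k : ℝ)

/-- `δ_G(n) = -α_p(G) + Σ_{k=1}^e r_k(G)·δ(n-1,k)`. -/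
noncomputable def deltaG (p e : ℕ) (G : Type*) [CommGroup G] (n : ℤ) : ℝ :=
  -alphaP p e G + ∑ k ∈ Finset.Icc 1 e, (pkRank G p k : ℝ) * deltaNK p (n - 1) k

/-- `ε(G,q,n)` with `q = p^f`. -/
noncomputable def epsilonGQN (p e f : ℕ) (G : Type*) [CommGroup G] (n : ℕ) : ℝ :=
  ∏ k ∈ Finset.Icc 1 e, ∏ j ∈ Finset.range (pkRank G p k - pkRank G p (k + 1)),
    (1 - (p : ℝ) ^ ((pkRank G p (k + 1) : ℤ) + j - 1) /
      ((p : ℝ) ^ f) ^ (((p : ℝ) - 1) * ((n : ℝ) - 1) / (p : ℝ) ^ k + deltaNK p ((n : ℤ) - 1) k))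


section Aux

lemma range_pow_le_pow (A : Type*) [CommGroup A] (p j : ℕ) :
    (powMonoidHom (p ^ (j + 1)) : A →* A).range ≤ (powMonoidHom (p ^ j) : A →* A).range := by
  rintro x ⟨y, rfl⟩
  refine ⟨y ^ p, ?_⟩
  simp only [powMonoidHom_apply, ← pow_mul]
  rw [← pow_succ']

lemma cardQ_mul (A : Type*) [CommGroup A] [Finite A] (p j : ℕ) :
    Nat.card ((powMonoidHom (p ^ j) : A →* A).range ⧸
        ((powMonoidHom (p ^ (j + 1)) : A →* A).range.subgroupOf
          (powMonoidHom (p ^ j) : A →* A).range))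
      * Nat.card ((powMonoidHom (p ^ (j + 1)) : A →* A).range)
      = Nat.card ((powMonoidHom (p ^ j) : A →* A).range) := by
  have hle := range_pow_le_pow A p j
  have h1 : Nat.card (((powMonoidHom (p ^ (j + 1)) : A →* A).range.subgroupOf
      (powMonoidHom (p ^ j) : A →* A).range))
      = Nat.card ((powMonoidHom (p ^ (j + 1)) : A →* A).range) :=
    Nat.card_congr (Subgroup.subgroupOfEquivOfLe hle).toEquiv
  have h2 := Subgroup.index_mul_card
    ((powMonoidHom (p ^ (j + 1)) : A →* A).range.subgroupOf
      (powMonoidHom (p ^ j) : A →* A).range)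
  rw [Subgroup.index, h1] at h2
  exact h2

lemma range_pow_prod (G H : Type*) [CommGroup G] [CommGroup H] (m : ℕ) :
    (powMonoidHom m : G × H →* G × H).range =
      ((powMonoidHom m : G →* G).range).prod ((powMonoidHom m : H →* H).range) := by
  ext ⟨x, y⟩
  simp only [MonoidHom.mem_range, Subgroup.mem_prod, powMonoidHom_apply, Prod.exists,
    Prod.pow_mk, Prod.mk.injEq]
  constructor
  · rintro ⟨a, b, h1, h2⟩
    exact ⟨⟨a, h1⟩, ⟨b, h2⟩⟩
  · rintro ⟨⟨a, h1⟩, ⟨b, h2⟩⟩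
    exact ⟨a, b, h1, h2⟩

lemma cardN_prod (G H : Type*) [CommGroup G] [CommGroup H] (m : ℕ) :
    Nat.card ((powMonoidHom m : G × H →* G × H).range)
      = Nat.card ((powMonoidHom m : G →* G).range)
        * Nat.card ((powMonoidHom m : H →* H).range) := by
  rw [range_pow_prod, Nat.card_congr (Subgroup.prodEquiv _ _).toEquiv, Nat.card_prod]

lemma pkRank_prod (p : ℕ) (hp : p.Prime) (G H : Type*) [CommGroup G] [CommGroup H]
    [Finite G] [Finite H] (hG : IsPGroup p G) (hH : IsPGroup p H) {k : ℕ} (hk : k ≠ 0) :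
    pkRank (G × H) p k = pkRank G p k + pkRank H p k := by
  haveI : Fact p.Prime := ⟨hp⟩
  obtain ⟨j, rfl⟩ := Nat.exists_eq_succ_of_ne_zero hk
  have hQG : IsPGroup p ((powMonoidHom (p ^ j) : G →* G).range ⧸
      ((powMonoidHom (p ^ (j + 1)) : G →* G).range.subgroupOf
        (powMonoidHom (p ^ j) : G →* G).range)) :=
    IsPGroup.to_quotient (hG.to_subgroup _) _
  have hQH : IsPGroup p ((powMonoidHom (p ^ j) : H →* H).range ⧸
      ((powMonoidHom (p ^ (j + 1)) : H →* H).range.subgroupOf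
        (powMonoidHom (p ^ j) : H →* H).range)) :=
    IsPGroup.to_quotient (hH.to_subgroup _) _
  obtain ⟨s, hs⟩ := hQG.exists_card_eq
  obtain ⟨t, ht⟩ := hQH.exists_card_eq
  have hG2 := cardQ_mul G p j
  have hH2 := cardQ_mul H p j
  have hGH2 := cardQ_mul (G × H) p j
  rw [cardN_prod, cardN_prod] at hGH2
  have hbpos : 0 < Nat.card ((powMonoidHom (p ^ (j + 1)) : G →* G).range)
      * Nat.card ((powMonoidHom (p ^ (j + 1)) : H →* H).range) :=
    Nat.mul_pos Nat.card_pos Nat.card_pos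
  have hmul : Nat.card ((powMonoidHom (p ^ j) : G × H →* G × H).range ⧸
      ((powMonoidHom (p ^ (j + 1)) : G × H →* G × H).range.subgroupOf
        (powMonoidHom (p ^ j) : G × H →* G × H).range))
      = p ^ s * p ^ t := by
    have := hGH2
    rw [← hG2, ← hH2] at this
    rw [← hs, ← ht]
    exact Nat.eq_of_mul_eq_mul_right hbpos (by linarith [this])
  unfold pkRank
  simp only [Nat.succ_sub_one]
  rw [hmul, hs, ht, ← pow_add, Nat.log_pow hp.one_lt, Nat.log_pow hp.one_lt,
    Nat.log_pow hp.one_lt]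

lemma pkRank_top_zero (p e : ℕ) (A : Type*) [CommGroup A]
    (hexp : Monoid.exponent A ∣ p ^ e) : pkRank A p (e + 1) = 0 := by
  have hone : ∀ x ∈ (powMonoidHom (p ^ e) : A →* A).range, x = 1 := by
    rintro x ⟨y, rfl⟩
    simp only [powMonoidHom_apply]
    exact orderOf_dvd_iff_pow_eq_one.mp ((Monoid.order_dvd_exponent y).trans hexp)
  haveI hsub : Subsingleton ((powMonoidHom (p ^ (e + 1 - 1)) : A →* A).range) := by
    constructor
    rintro ⟨a, ha⟩ ⟨b, hb⟩
    exact Subtype.ext (show a = b by rw [hone a ha, hone b hb])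
  haveI : Subsingleton ((powMonoidHom (p ^ (e + 1 - 1)) : A →* A).range ⧸
      ((powMonoidHom (p ^ (e + 1)) : A →* A).range.subgroupOf
        (powMonoidHom (p ^ (e + 1 - 1)) : A →* A).range)) :=
    Quotient.instSubsingletonQuotient _
  unfold pkRank
  rw [Nat.card_eq_one_iff_unique.mpr ⟨inferInstance, inferInstance⟩, Nat.log_one_right]

lemma abel_key (e : ℕ) (r a : ℕ → ℝ) (hr : r (e + 1) = 0) (ha0 : a 0 = 0) :
    ∑ i ∈ Finset.range e, r (i + 1) * (a (i + 1) - a i)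
      = ∑ i ∈ Finset.range e, (r (i + 1) - r (i + 2)) * a (i + 1) := by
  have h := Finset.sum_range_sub (fun i => r (i + 1) * a i) e
  have h2 : ∑ i ∈ Finset.range e,
      (r (i + 1) * (a (i + 1) - a i) - (r (i + 1) - r (i + 2)) * a (i + 1))
      = ∑ i ∈ Finset.range e,
        ((fun i => r (i + 1) * a i) (i + 1) - (fun i => r (i + 1) * a i) i) := by
    apply Finset.sum_congr rfl
    intro i _
    simp only
    ring
  rw [h] at h2
  have h3 : ∑ i ∈ Finset.range e,
      (r (i + 1) * (a (i + 1) - a i) - (r (i + 1) - r (i + 2)) * a (i + 1)) = 0 := by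
    rw [h2, hr, ha0]
    ring
  rw [Finset.sum_sub_distrib] at h3
  linarith

end Aux

/-- `δ_G(n) = −α_p(G) + Σ_{k=1}^e r̃_k(G)·{(n−1)/p^k}` and
`δ_{G×H}(n) = δ_G(n) + δ_H(n)`. -/
theorem stmt_9 (p e : ℕ) (hp : p.Prime) (G H : Type*) [CommGroup G] [CommGroup H]
    [Finite G] [Finite H] (hG : IsPGroup p G) (hH : IsPGroup p H)
    (hexpG : Monoid.exponent G ∣ p ^ e) (hexpH : Monoid.exponent H ∣ p ^ e) :
    (∀ n : ℤ, deltaG p e G n = -alphaP p e G +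
        ∑ k ∈ Finset.Icc 1 e, ((pkRank G p k : ℝ) - (pkRank G p (k + 1) : ℝ)) *
          Int.fract (((n : ℝ) - 1) / (p : ℝ) ^ k)) ∧
    (∀ n : ℤ, deltaG p e (G × H) n = deltaG p e G n + deltaG p e H n) := by
  haveI : Fact p.Prime := ⟨hp⟩
  constructor
  · intro n
    unfold deltaG
    congr 1
    have hcast : ((n - 1 : ℤ) : ℝ) = (n : ℝ) - 1 := by push_cast; ring
    set a : ℕ → ℝ := fun j => Int.fract (((n : ℝ) - 1) / (p : ℝ) ^ j) with ha
    set r : ℕ → ℝ := fun i => (pkRank G p i : ℝ) with hrdef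
    have ha0 : a 0 = 0 := by
      simp only [ha, pow_zero, div_one, ← hcast, Int.fract_intCast]
    have hre : r (e + 1) = 0 := by
      simp only [hrdef, pkRank_top_zero p e G hexpG, Nat.cast_zero]
    have hIcc : Finset.Icc 1 e = Finset.Ico 1 (e + 1) := (Finset.Ico_add_one_right_eq_Icc 1 e).symm
    rw [hIcc, Finset.sum_Ico_eq_sum_range, Finset.sum_Ico_eq_sum_range]
    have hLHS : ∀ i ∈ Finset.range (e + 1 - 1),
        (pkRank G p (1 + i) : ℝ) * deltaNK p (n - 1) (1 + i)
          = r (i + 1) * (a (i + 1) - a i) := by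
      intro i _
      have h1 : 1 + i = i + 1 := Nat.add_comm 1 i
      rw [h1]
      have h2 : i + 1 - 1 = i := rfl
      simp only [deltaNK, h2, hcast, hrdef, ha]
    have hRHS : ∀ i ∈ Finset.range (e + 1 - 1),
        ((pkRank G p (1 + i) : ℝ) - (pkRank G p (1 + i + 1) : ℝ))
            * Int.fract (((n : ℝ) - 1) / (p : ℝ) ^ (1 + i))
          = (r (i + 1) - r (i + 2)) * a (i + 1) := by
      intro i _
      have h1 : 1 + i = i + 1 := Nat.add_comm 1 i
      rw [h1]
    rw [Finset.sum_congr rfl hLHS, Finset.sum_congr rfl hRHS]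
    have he : e + 1 - 1 = e := rfl
    rw [he]
    exact abel_key e r a hre ha0
  · intro n
    have hpk : ∀ k ∈ Finset.Icc 1 e, (pkRank (G × H) p k : ℝ)
        = (pkRank G p k : ℝ) + (pkRank H p k : ℝ) := by
      intro k hk
      have hk1 : k ≠ 0 := by
        have := (Finset.mem_Icc.mp hk).1; omega
      rw [pkRank_prod p hp G H hG hH hk1]
      push_cast; ring
    unfold deltaG alphaP
    have hA : ∑ k ∈ Finset.Icc 1 e, ((p : ℝ) - 1) / (p : ℝ) ^ k * (pkRank (G × H) p k : ℝ)
        = ∑ k ∈ Finset.Icc 1 e, ((p : ℝ) - 1) / (p : ℝ) ^ k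
            * ((pkRank G p k : ℝ) + (pkRank H p k : ℝ)) :=
      Finset.sum_congr rfl fun k hk => by rw [hpk k hk]
    have hB : ∑ k ∈ Finset.Icc 1 e, (pkRank (G × H) p k : ℝ) * deltaNK p (n - 1) k
        = ∑ k ∈ Finset.Icc 1 e, ((pkRank G p k : ℝ) + (pkRank H p k : ℝ))
            * deltaNK p (n - 1) k :=
      Finset.sum_congr rfl fun k hk => by rw [hpk k hk]
    rw [hA, hB]
    simp only [mul_add, add_mul]
    rw [Finset.sum_add_distrib, Finset.sum_add_distrib]
    ring
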